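/- Let N ≥ 2 be an integer and 2 ≤ p ≤ N. If k ≤ -(N-1)/(p-1), then E_{p,N,k}[cos](θ) ≥ 0 for every θ ∈ (0, π/2) (u = r^k·cos(θ) is p-subharmonic in ℝ^N₊); and if k ∈ [-(p+N-3)/(2p-3), 0), then E_{p,N,k}[cos](θ) ≤ 0 for every θ ∈ (0, π/2) (u = r^k·cos(θ) is p-superharmonic in ℝ^N₊). -/

import Mathlib

noncomputable section
open Real Set

/-- The differential expression `E_{p,N,k}[f](θ)` whose sign coincides with the sign of the
`p`-Laplacian of the quasiradial function `u(r,θ) = r^k · f(θ)` in the upper half-space. -/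
def Ecal (p : ℝ) (N : ℕ) (k : ℝ) (f : ℝ → ℝ) (θ : ℝ) : ℝ :=
  ((p - 1) * (deriv f θ) ^ 2 + k ^ 2 * (f θ) ^ 2) * deriv (deriv f) θ
    + k * ((2 * p - 3) * k + (N : ℝ) - p) * f θ * (deriv f θ) ^ 2
    + k ^ 3 * (k * (p - 1) + (N : ℝ) - p) * (f θ) ^ 3
    + ((N : ℝ) - 2) * ((deriv f θ) ^ 2 + k ^ 2 * (f θ) ^ 2) * deriv f θ * Real.cot θ

lemma Ecal_cos (p : ℝ) (N : ℕ) (k θ : ℝ) (hs : Real.sin θ ≠ 0) :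
    Ecal p N k Real.cos θ = Real.cos θ *
      ( ((2*p-3)*k^2 + ((N:ℝ)-p)*k - (p + (N:ℝ) - 3)) * Real.sin θ ^ 2
        + ((p-1)*k^4 + ((N:ℝ)-p)*k^3 - ((N:ℝ)-1)*k^2) * Real.cos θ ^ 2 ) := by
  have h1 : deriv Real.cos = fun x => -Real.sin x := Real.deriv_cos'
  have h2 : deriv (deriv Real.cos) θ = -Real.cos θ := by
    rw [h1]; simp
  unfold Ecal
  rw [h1, Real.cot_eq_cos_div_sin]; simp only [deriv.fun_neg, Real.deriv_sin]
  field_simp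
  ring


/-- For `2 ≤ p ≤ N`: `u = r^k cos θ` is `p`-subharmonic for `k ≤ -(N-1)/(p-1)` and
`p`-superharmonic for `k ∈ [-(p+N-3)/(2p-3), 0)`. -/
theorem Ecal_cos_sign_p_between_two_N (N : ℕ) (hN : 2 ≤ N) (p : ℝ) (hp1 : 2 ≤ p)
    (hp2 : p ≤ (N : ℝ)) (k : ℝ) :
    (k ≤ -(((N : ℝ) - 1) / (p - 1)) →
      ∀ θ ∈ Ioo (0 : ℝ) (π / 2), 0 ≤ Ecal p N k Real.cos θ) ∧
    (k ∈ Ico (-((p + (N : ℝ) - 3) / (2 * p - 3))) 0 →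
      ∀ θ ∈ Ioo (0 : ℝ) (π / 2), Ecal p N k Real.cos θ ≤ 0) := by
  have hN2 : (2:ℝ) ≤ (N:ℝ) := by exact_mod_cast hN
  have hp0 : (0:ℝ) < p - 1 := by linarith
  have hq0 : (0:ℝ) < 2 * p - 3 := by linarith
  have hd : (p + (N:ℝ) - 3) * (p - 1) ≤ ((N:ℝ) - 1) * (2 * p - 3) := by
    nlinarith [mul_nonneg (by linarith : (0:ℝ) ≤ p - 2) (by linarith : (0:ℝ) ≤ (N:ℝ) - p)]
  constructor
  · intro hk θ hθ
    have hc : 0 < Real.cos θ := Real.cos_pos_of_mem_Ioo ⟨by linarith [hθ.1, Real.pi_pos], hθ.2⟩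
    have hsin : 0 < Real.sin θ := Real.sin_pos_of_pos_of_lt_pi hθ.1 (by linarith [hθ.2, Real.pi_pos])
    rw [Ecal_cos p N k θ hsin.ne']
    have h1 : ((N:ℝ) - 1) ≤ -k * (p - 1) := by
      have := (div_le_iff₀ hp0).mp (by linarith : ((N:ℝ)-1)/(p-1) ≤ -k)
      linarith
    have hk1 : (p - 1) * k + ((N:ℝ) - 1) ≤ 0 := by nlinarith
    have hkneg : k ≤ -1 := by nlinarith
    have hk2 : (2 * p - 3) * k + (p + (N:ℝ) - 3) ≤ 0 := by
      nlinarith [mul_nonneg hq0.le (neg_nonneg.mpr hk1), mul_nonneg hp0.le (neg_nonneg.mpr hk1)]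
    have hA : 0 ≤ (2*p-3)*k^2 + ((N:ℝ)-p)*k - (p + (N:ℝ) - 3) := by
      nlinarith [mul_nonneg (by linarith : (0:ℝ) ≤ 1 - k) (neg_nonneg.mpr hk2)]
    have hB : 0 ≤ (p-1)*k^4 + ((N:ℝ)-p)*k^3 - ((N:ℝ)-1)*k^2 := by
      nlinarith [mul_nonneg (mul_nonneg (sq_nonneg k) (by linarith : (0:ℝ) ≤ 1 - k))
        (neg_nonneg.mpr hk1)]
    exact mul_nonneg hc.le (add_nonneg (mul_nonneg hA (sq_nonneg _))
      (mul_nonneg hB (sq_nonneg _)))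
  · intro hk θ hθ
    have hc : 0 < Real.cos θ := Real.cos_pos_of_mem_Ioo ⟨by linarith [hθ.1, Real.pi_pos], hθ.2⟩
    have hsin : 0 < Real.sin θ := Real.sin_pos_of_pos_of_lt_pi hθ.1 (by linarith [hθ.2, Real.pi_pos])
    rw [Ecal_cos p N k θ hsin.ne']
    obtain ⟨hka, hkb⟩ := hk
    have h1 : -k * (2 * p - 3) ≤ p + (N:ℝ) - 3 := by
      have := (le_div_iff₀ hq0).mp (neg_le.mpr hka)
      linarith
    have hk1' : 0 ≤ (2 * p - 3) * k + (p + (N:ℝ) - 3) := by nlinarith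
    have hA : (2*p-3)*k^2 + ((N:ℝ)-p)*k - (p + (N:ℝ) - 3) ≤ 0 := by
      nlinarith [mul_nonneg (by linarith : (0:ℝ) ≤ 1 - k) hk1']
    have hkN : 0 ≤ (p - 1) * k + ((N:ℝ) - 1) := by
      nlinarith [mul_nonneg hp0.le hk1']
    have hB : (p-1)*k^4 + ((N:ℝ)-p)*k^3 - ((N:ℝ)-1)*k^2 ≤ 0 := by
      nlinarith [mul_nonneg (mul_nonneg (sq_nonneg k) (by linarith : (0:ℝ) ≤ 1 - k)) hkN]
    
    nlinarith [mul_nonneg (neg_nonneg.mpr hA) (sq_nonneg (Real.sin θ)), mul_nonneg (neg_nonneg.mpr hB) (sq_nonneg (Real.cos θ)), mul_pos hc hc, hc.le, mul_nonneg hc.le (mul_nonneg (neg_nonneg.mpr hA) (sq_nonneg (Real.sin θ))), mul_nonneg hc.le (mul_nonneg (neg_nonneg.mpr hB) (sq_nonneg (Real.cos θ)))]
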